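/- arXiv:1804.06713 — 3 statements merged into one kernel-verified Lean document; each statement's English description precedes it below -/
import Mathlib

section
/- Let ω₃ : ℝ → Matrix (Fin n) (Fin m) ℝ be defined by ω₃(τ) = ∫_{-τ}^{0} ω₁(τ+θ) · C · exp(A·θ) dθ, where ω₁ : ℝ → Matrix (Fin n) (Fin n) ℝ is continuous, C is an n×m matrix, and A is an m×m matrix. Then ω₃(0) = 0 and ω₃ satisfies the ODE ω₃'(τ) = -ω₃(τ)·A + ω₁(τ)·C for all τ. -/
open Matrix intervalIntegral

attribute [local instance] Matrix.linftyOpNormedAddCommGroup Matrix.linftyOpNormedRing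
  Matrix.linftyOpNormedAlgebra

private theorem expEntryDeriv {m : ℕ} (A : Matrix (Fin m) (Fin m) ℝ) (τ : ℝ) (k j : Fin m) :
    HasDerivAt (fun u : ℝ => NormedSpace.exp (u • A) k j)
      ((A * NormedSpace.exp (τ • A)) k j) τ := by
  have h := hasDerivAt_exp_smul_const' A τ
  let L : Matrix (Fin m) (Fin m) ℝ →L[ℝ] ℝ :=
    LinearMap.toContinuousLinearMap (Matrix.entryLinearMap ℝ ℝ k j)
  have := L.hasFDerivAt.comp_hasDerivAt τ h
  convert this using 1
  · rfl
  · rfl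
  · rfl
  · rfl

private theorem expAddMul {m : ℕ} (A : Matrix (Fin m) (Fin m) ℝ) (a b : ℝ) :
    NormedSpace.exp (a • A) * NormedSpace.exp (b • A)
      = NormedSpace.exp ((a + b) • A) := by
  rw [add_smul, Matrix.exp_add_of_commute]
  exact (Commute.refl A).smul_left a |>.smul_right b

/-- If `ω₃(τ) = ∫_{-τ}^{0} ω₁(τ+θ)·C·exp(A·θ) dθ` (entrywise), with `ω₁` continuous,
then `ω₃ 0 = 0` and `ω₃' = -ω₃·A + ω₁·C`. -/
theorem stmt2 {n m : ℕ} (A : Matrix (Fin m) (Fin m) ℝ) (C : Matrix (Fin n) (Fin m) ℝ)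
    (ω₁ : ℝ → Matrix (Fin n) (Fin n) ℝ)
    (hω₁ : ∀ i j : Fin n, Continuous fun τ : ℝ => ω₁ τ i j)
    (ω₃ : ℝ → Matrix (Fin n) (Fin m) ℝ)
    (hω₃ : ∀ (τ : ℝ) (i : Fin n) (j : Fin m),
      ω₃ τ i j = ∫ θ in (-τ)..0, (ω₁ (τ + θ) * C * NormedSpace.exp (θ • A)) i j) :
    ω₃ 0 = 0 ∧
      ∀ (τ : ℝ) (i : Fin n) (j : Fin m),
        HasDerivAt (fun t : ℝ => ω₃ t i j) ((-(ω₃ τ * A) + ω₁ τ * C) i j) τ := by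
  have hcontM : Continuous fun s : ℝ => ω₁ s * C * NormedSpace.exp (s • A) := by
    have h1 : Continuous ω₁ := continuous_matrix hω₁
    have h2 : Continuous fun s : ℝ => NormedSpace.exp (s • A) :=
      NormedSpace.exp_continuous.comp (continuous_id.smul continuous_const)
    exact (h1.matrix_mul continuous_const).matrix_mul h2
  have hcont : ∀ (i : Fin n) (k : Fin m),
      Continuous fun s : ℝ => (ω₁ s * C * NormedSpace.exp (s • A)) i k :=
    fun i k => hcontM.matrix_elem i k
  have rep : ∀ (τ : ℝ) (i : Fin n) (j : Fin m),
      ω₃ τ i j = ∑ k, (∫ s in (0:ℝ)..τ, (ω₁ s * C * NormedSpace.exp (s • A)) i k) *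
        NormedSpace.exp ((-τ) • A) k j := by
    intro τ i j
    rw [hω₃]
    have key : ∀ θ : ℝ, (ω₁ (τ + θ) * C * NormedSpace.exp (θ • A)) i j
        = ∑ k, (ω₁ (θ + τ) * C * NormedSpace.exp ((θ + τ) • A)) i k *
            NormedSpace.exp ((-τ) • A) k j := by
      intro θ
      have h1 : (∑ k, (ω₁ (θ + τ) * C * NormedSpace.exp ((θ + τ) • A)) i k *
            NormedSpace.exp ((-τ) • A) k j)
          = (ω₁ (θ + τ) * C * NormedSpace.exp ((θ + τ) • A) *
              NormedSpace.exp ((-τ) • A)) i j := (Matrix.mul_apply).symm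
      rw [h1, Matrix.mul_assoc (ω₁ (θ + τ) * C), expAddMul,
        show θ + τ + -τ = θ by ring, add_comm τ θ]
    calc (∫ θ in (-τ)..0, (ω₁ (τ + θ) * C * NormedSpace.exp (θ • A)) i j)
        = ∫ θ in (-τ)..0, (fun s => ∑ k,
            (ω₁ s * C * NormedSpace.exp (s • A)) i k *
              NormedSpace.exp ((-τ) • A) k j) (θ + τ) := by
          apply intervalIntegral.integral_congr
          intro θ _
          exact key θ
      _ = ∫ s in (-τ + τ)..(0 + τ), ∑ k, (ω₁ s * C * NormedSpace.exp (s • A)) i k *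
            NormedSpace.exp ((-τ) • A) k j := by
          exact intervalIntegral.integral_comp_add_right
            (fun s => ∑ k, (ω₁ s * C * NormedSpace.exp (s • A)) i k *
              NormedSpace.exp ((-τ) • A) k j) τ
      _ = ∑ k, (∫ s in (0:ℝ)..τ, (ω₁ s * C * NormedSpace.exp (s • A)) i k) *
            NormedSpace.exp ((-τ) • A) k j := by
          rw [neg_add_cancel, zero_add]
          rw [intervalIntegral.integral_finset_sum]
          · exact Finset.sum_congr rfl fun k _ => intervalIntegral.integral_mul_const _ _
          · intro k _
            exact ((hcont i k).mul continuous_const).intervalIntegrable _ _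
  constructor
  · ext i j
    rw [hω₃]
    simp
  · intro τ i j
    have hG : ∀ k : Fin m, HasDerivAt
        (fun t : ℝ => ∫ s in (0:ℝ)..t, (ω₁ s * C * NormedSpace.exp (s • A)) i k)
        ((ω₁ τ * C * NormedSpace.exp (τ • A)) i k) τ :=
      fun k => ((hcont i k).integral_hasStrictDerivAt 0 τ).hasDerivAt
    have hE : ∀ k j : Fin m, HasDerivAt (fun t : ℝ => NormedSpace.exp ((-t) • A) k j)
        (-((A * NormedSpace.exp ((-τ) • A)) k j)) τ := by
      intro k j
      have h := (expEntryDeriv A (-τ) k j).comp τ (hasDerivAt_neg τ)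
      simpa [Function.comp_def, mul_comm] using h
    have hsum : HasDerivAt (fun t : ℝ => ∑ k,
        (∫ s in (0:ℝ)..t, (ω₁ s * C * NormedSpace.exp (s • A)) i k) *
          NormedSpace.exp ((-t) • A) k j)
        (∑ k, ((ω₁ τ * C * NormedSpace.exp (τ • A)) i k *
            NormedSpace.exp ((-τ) • A) k j +
          (∫ s in (0:ℝ)..τ, (ω₁ s * C * NormedSpace.exp (s • A)) i k) *
            (-((A * NormedSpace.exp ((-τ) • A)) k j)))) τ :=
      HasDerivAt.fun_sum fun k _ => (hG k).mul (hE k j)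
    have heq : (fun t : ℝ => ω₃ t i j) = fun t => ∑ k,
        (∫ s in (0:ℝ)..t, (ω₁ s * C * NormedSpace.exp (s • A)) i k) *
          NormedSpace.exp ((-t) • A) k j := funext fun t => rep t i j
    rw [heq]
    convert hsum using 1
    rw [Finset.sum_add_distrib]
    have e1 : (∑ k, (ω₁ τ * C * NormedSpace.exp (τ • A)) i k *
        NormedSpace.exp ((-τ) • A) k j) = (ω₁ τ * C) i j := by
      rw [← Matrix.mul_apply, Matrix.mul_assoc (ω₁ τ * C), expAddMul, add_neg_cancel,
        zero_smul, NormedSpace.exp_zero, Matrix.mul_one]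
    have hcomm : A * NormedSpace.exp ((-τ) • A)
        = NormedSpace.exp ((-τ) • A) * A :=
      ((Commute.refl A).smul_right (-τ : ℝ)).exp_right
    have e2 : (∑ k, (∫ s in (0:ℝ)..τ, (ω₁ s * C * NormedSpace.exp (s • A)) i k) *
        (-((A * NormedSpace.exp ((-τ) • A)) k j))) = -((ω₃ τ * A) i j) := by
      simp_rw [hcomm, mul_neg, Finset.sum_neg_distrib]
      congr 1
      rw [Matrix.mul_apply]
      simp_rw [rep τ i, Matrix.mul_apply, Finset.sum_mul, Finset.mul_sum, mul_assoc]
      rw [Finset.sum_comm]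
    rw [Matrix.add_apply, Matrix.neg_apply, e1, e2]
    ring
end

section
/- Let ω₅ : ℝ → Matrix (Fin m) (Fin n) ℝ be defined by ω₅(τ) = ∫_{-h}^{-h+τ} (C·exp(A·θ))ᵀ · ω₁(τ-θ-h) dθ, where ω₁ : ℝ → Matrix (Fin n) (Fin n) ℝ is continuous, C is an n×m matrix, A is an m×m matrix, and h ≥ 0. Then ω₅(0) = 0 and ω₅'(τ) = Aᵀ·ω₅(τ) + (C·exp(-A·h))ᵀ·ω₁(τ) for all τ. -/
open Matrix

private lemma sum_entry_eq {n m : ℕ} (X : Matrix (Fin m) (Fin m) ℝ)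
    (M : Matrix (Fin m) (Fin n) ℝ) (i : Fin m) (j : Fin n) :
    ∑ k, X k i * M k j = (Xᵀ * M) i j := by
  simp [Matrix.mul_apply, Matrix.transpose_apply]

private lemma exp_smul_add {m : ℕ} (A : Matrix (Fin m) (Fin m) ℝ) (a b : ℝ) :
    NormedSpace.exp ((a + b) • A)
      = NormedSpace.exp (a • A) * NormedSpace.exp (b • A) := by
  rw [add_smul]
  exact Matrix.exp_add_of_commute _ _ (((Commute.refl A).smul_left a).smul_right b)

private lemma matrix_exp_continuous {m : ℕ} :
    Continuous (NormedSpace.exp : Matrix (Fin m) (Fin m) ℝ → Matrix (Fin m) (Fin m) ℝ) := by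
  letI : SeminormedRing (Matrix (Fin m) (Fin m) ℝ) := Matrix.linftyOpSemiNormedRing
  letI : NormedRing (Matrix (Fin m) (Fin m) ℝ) := Matrix.linftyOpNormedRing
  letI : NormedAlgebra ℝ (Matrix (Fin m) (Fin m) ℝ) := Matrix.linftyOpNormedAlgebra
  letI : NormedAlgebra ℚ (Matrix (Fin m) (Fin m) ℝ) := Matrix.linftyOpNormedAlgebra
  exact NormedSpace.exp_continuous

private lemma hasDerivAt_exp_entry {m : ℕ} (A : Matrix (Fin m) (Fin m) ℝ) (τ : ℝ)
    (k i : Fin m) :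
    HasDerivAt (fun t : ℝ => NormedSpace.exp (t • A) k i)
      ((NormedSpace.exp (τ • A) * A) k i) τ := by
  letI : SeminormedRing (Matrix (Fin m) (Fin m) ℝ) := Matrix.linftyOpSemiNormedRing
  letI : NormedRing (Matrix (Fin m) (Fin m) ℝ) := Matrix.linftyOpNormedRing
  letI : NormedAlgebra ℝ (Matrix (Fin m) (Fin m) ℝ) := Matrix.linftyOpNormedAlgebra
  have h1 := hasDerivAt_exp_smul_const (𝕂 := ℝ) A τ
  have h2 := (LinearMap.toContinuousLinearMap
      (Matrix.entryLinearMap ℝ ℝ k i)).hasFDerivAt.comp_hasDerivAt τ h1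
  exact h2

/-- If `ω₅(τ) = ∫_{-h}^{-h+τ} (C·exp(A·θ))ᵀ·ω₁(τ-θ-h) dθ` (entrywise), with `ω₁`
continuous and `h ≥ 0`, then `ω₅ 0 = 0` and `ω₅' = Aᵀ·ω₅ + (C·exp(-A·h))ᵀ·ω₁`. -/
theorem stmt3 {n m : ℕ} (A : Matrix (Fin m) (Fin m) ℝ) (C : Matrix (Fin n) (Fin m) ℝ)
    (h : ℝ) (hh : 0 ≤ h)
    (ω₁ : ℝ → Matrix (Fin n) (Fin n) ℝ)
    (hω₁ : ∀ i j : Fin n, Continuous fun τ : ℝ => ω₁ τ i j)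
    (ω₅ : ℝ → Matrix (Fin m) (Fin n) ℝ)
    (hω₅ : ∀ (τ : ℝ) (i : Fin m) (j : Fin n),
      ω₅ τ i j = ∫ θ in (-h)..(-h + τ),
        ((C * NormedSpace.exp (θ • A))ᵀ * ω₁ (τ - θ - h)) i j) :
    ω₅ 0 = 0 ∧
      ∀ (τ : ℝ) (i : Fin m) (j : Fin n),
        HasDerivAt (fun t : ℝ => ω₅ t i j)
          ((Aᵀ * ω₅ τ + (C * NormedSpace.exp ((-h) • A))ᵀ * ω₁ τ) i j) τ := by
  -- the inner integrand after substitution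
  set q : ℝ → Matrix (Fin m) (Fin n) ℝ :=
    fun s => (C * NormedSpace.exp ((-s - h) • A))ᵀ * ω₁ s with hq
  have hω₁c : Continuous ω₁ := continuous_matrix fun i j => hω₁ i j
  have hqc : Continuous q := by
    apply Continuous.matrix_mul _ hω₁c
    apply Continuous.matrix_transpose
    exact continuous_const.matrix_mul <| matrix_exp_continuous.comp <|
      ((continuous_neg.sub continuous_const).smul continuous_const)
  -- the key representation of ω₅
  have key : ∀ (τ : ℝ) (i : Fin m) (j : Fin n),
      ω₅ τ i j = ∑ k, NormedSpace.exp (τ • A) k i * ∫ s in (0:ℝ)..τ, q s k j := by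
    intro τ i j
    rw [hω₅]
    have h1 : ∀ θ : ℝ, ((C * NormedSpace.exp (θ • A))ᵀ * ω₁ (τ - θ - h)) i j
        = (fun s => ∑ k, NormedSpace.exp (τ • A) k i * q s k j) ((τ - h) - θ) := by
      intro θ
      simp only
      rw [sum_entry_eq]
      simp only [hq]
      have e1 : -(τ - h - θ) - h = θ - τ := by ring
      rw [e1, ← Matrix.mul_assoc, ← Matrix.transpose_mul, Matrix.mul_assoc,
        ← exp_smul_add, show θ - τ + τ = θ from by ring,
        show τ - h - θ = τ - θ - h from by ring]
    calc (∫ θ in (-h)..(-h + τ), ((C * NormedSpace.exp (θ • A))ᵀ * ω₁ (τ - θ - h)) i j)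
        = ∫ θ in (-h)..(-h + τ),
            (fun s => ∑ k, NormedSpace.exp (τ • A) k i * q s k j) ((τ - h) - θ) := by
          exact intervalIntegral.integral_congr fun θ _ => h1 θ
      _ = ∫ s in ((τ - h) - (-h + τ))..((τ - h) - (-h)),
            ∑ k, NormedSpace.exp (τ • A) k i * q s k j :=
          intervalIntegral.integral_comp_sub_left
            (fun s => ∑ k, NormedSpace.exp (τ • A) k i * q s k j) (τ - h)
      _ = ∫ s in (0:ℝ)..τ, ∑ k, NormedSpace.exp (τ • A) k i * q s k j := by
          rw [show τ - h - (-h + τ) = 0 from by ring, show τ - h - -h = τ from by ring]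
      _ = ∑ k, ∫ s in (0:ℝ)..τ, NormedSpace.exp (τ • A) k i * q s k j := by
          apply intervalIntegral.integral_finset_sum
          intro k _
          exact (continuous_const.mul (hqc.matrix_elem k j)).intervalIntegrable _ _
      _ = ∑ k, NormedSpace.exp (τ • A) k i * ∫ s in (0:ℝ)..τ, q s k j := by
          simp_rw [intervalIntegral.integral_const_mul]
  constructor
  · ext i j
    rw [hω₅]
    simp
  · intro τ i j
    have hrepr : (fun t : ℝ => ω₅ t i j)
        = fun t : ℝ => ∑ k, NormedSpace.exp (t • A) k i * ∫ s in (0:ℝ)..t, q s k j :=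
      funext fun t => key t i j
    -- derivative of each summand
    have hG : ∀ k : Fin m, HasDerivAt (fun u : ℝ => ∫ s in (0:ℝ)..u, q s k j)
        (q τ k j) τ := by
      intro k
      exact intervalIntegral.integral_hasDerivAt_right
        ((hqc.matrix_elem k j).intervalIntegrable _ _)
        (hqc.matrix_elem k j).stronglyMeasurable.stronglyMeasurableAtFilter
        (hqc.matrix_elem k j).continuousAt
    have hsum : HasDerivAt
        (fun t : ℝ => ∑ k, NormedSpace.exp (t • A) k i * ∫ s in (0:ℝ)..t, q s k j)
        (∑ k, ((NormedSpace.exp (τ • A) * A) k i * (∫ s in (0:ℝ)..τ, q s k j)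
          + NormedSpace.exp (τ • A) k i * q τ k j)) τ :=
      HasDerivAt.fun_sum fun k _ => (hasDerivAt_exp_entry A τ k i).mul (hG k)
    have hval : (Aᵀ * ω₅ τ + (C * NormedSpace.exp ((-h) • A))ᵀ * ω₁ τ) i j
        = ∑ k, ((NormedSpace.exp (τ • A) * A) k i * (∫ s in (0:ℝ)..τ, q s k j)
          + NormedSpace.exp (τ • A) k i * q τ k j) := by
      rw [Finset.sum_add_distrib, Matrix.add_apply]
      congr 1
      · simp only [Matrix.mul_apply, Matrix.transpose_apply, key τ]
        simp_rw [Finset.mul_sum, Finset.sum_mul]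
        rw [Finset.sum_comm]
        refine Finset.sum_congr rfl fun k _ => Finset.sum_congr rfl fun l _ => ?_
        ring
      · rw [sum_entry_eq]
        simp only [hq]
        rw [← Matrix.mul_assoc, ← Matrix.transpose_mul, Matrix.mul_assoc,
          ← exp_smul_add, show -τ - h + τ = -h from by ring]
    rw [hrepr, hval]
    exact hsum
end

section
/- Suppose λ is a complex number, h ≥ 0, v₁, v₂ are nonzero vectors in ℂⁿ satisfying v₁ᵀ·(λ·I - A₀ - e^{-λh}·A₁ - ∫_{-h}^{0} e^{λθ}·A_D(θ) dθ) = 0 and v₂ᵀ·(-λ·I - A₀ - e^{λh}·A₁ - ∫_{-h}^{0} e^{-λθ}·A_D(θ) dθ) = 0, where A_D : ℝ → Matrix (Fin n) (Fin n) ℂ is continuous. Then ω₁(τ) := e^{λτ}·v₂·v₁ᵀ satisfies the delay differential equation ω₁'(τ) = ω₁(τ)·A₀ + ω₁(τ-h)·A₁ + ∫_{-h}^{0} ω₁(τ+θ)·A_D(θ) dθ for all τ ∈ ℝ. -/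
open Matrix

/-- If `v₁ ≠ 0`, `v₂ ≠ 0` are left eigen-row-vectors of the characteristic matrices at
`λ` and `-λ` respectively, then `ω₁(τ) = e^{λτ}·v₂·v₁ᵀ` satisfies the delay differential
equation `ω₁' = ω₁·A₀ + ω₁(·-h)·A₁ + ∫_{-h}^0 ω₁(·+θ)·A_D(θ) dθ` (entrywise). -/
theorem stmt6 {n : ℕ} (A₀ A₁ : Matrix (Fin n) (Fin n) ℂ)
    (AD : ℝ → Matrix (Fin n) (Fin n) ℂ)
    (hAD : ∀ i j : Fin n, Continuous fun θ : ℝ => AD θ i j)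
    (lam : ℂ) (h : ℝ) (hh : 0 ≤ h)
    (v₁ v₂ : Fin n → ℂ) (hv₁ : v₁ ≠ 0) (hv₂ : v₂ ≠ 0)
    (heig₁ : Matrix.vecMul v₁
      (lam • (1 : Matrix (Fin n) (Fin n) ℂ) - A₀ - Complex.exp (-lam * h) • A₁ -
        Matrix.of fun i j : Fin n => ∫ θ in (-h)..0, Complex.exp (lam * θ) * AD θ i j) = 0)
    (heig₂ : Matrix.vecMul v₂
      (-lam • (1 : Matrix (Fin n) (Fin n) ℂ) - A₀ - Complex.exp (lam * h) • A₁ -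
        Matrix.of fun i j : Fin n => ∫ θ in (-h)..0, Complex.exp (-lam * θ) * AD θ i j) = 0)
    (ω₁ : ℝ → Matrix (Fin n) (Fin n) ℂ)
    (hω₁ : ∀ τ : ℝ, ω₁ τ = Complex.exp (lam * τ) • Matrix.vecMulVec v₂ v₁) :
    ∀ (τ : ℝ) (i j : Fin n),
      HasDerivAt (fun t : ℝ => ω₁ t i j)
        ((ω₁ τ * A₀ + ω₁ (τ - h) * A₁ +
          Matrix.of fun i j : Fin n => ∫ θ in (-h)..0, (ω₁ (τ + θ) * AD θ) i j) i j) τ := by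
  intro τ i j
  have key : ∀ t : ℝ, ω₁ t i j = Complex.exp (lam * t) * (v₂ i * v₁ j) := by
    intro t
    simp [hω₁, Matrix.vecMulVec_apply, mul_assoc]
  -- integrability
  have hcont : ∀ k : Fin n, Continuous fun θ : ℝ => Complex.exp (lam * θ) * AD θ k j := by
    intro k
    exact (Complex.continuous_exp.comp (continuous_const.mul Complex.continuous_ofReal)).mul
      (hAD k j)
  -- the eigen identity at column j
  have he : lam * v₁ j = (∑ k, v₁ k * A₀ k j) +
      Complex.exp (-lam * h) * (∑ k, v₁ k * A₁ k j) +
      ∑ k, v₁ k * ∫ θ in (-h)..0, Complex.exp (lam * θ) * AD θ k j := by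
    have h0 := congrFun heig₁ j
    simp only [Matrix.vecMul, dotProduct, Matrix.sub_apply, Matrix.smul_apply,
      Matrix.one_apply, Matrix.of_apply, smul_eq_mul, Pi.zero_apply, mul_sub,
      Finset.sum_sub_distrib, mul_ite, mul_one, mul_zero, Finset.sum_ite_eq',
      Finset.mem_univ, if_true] at h0
    have e1 : ∑ x : Fin n, v₁ x * (Complex.exp (-lam * h) * A₁ x j) =
        Complex.exp (-lam * h) * ∑ x : Fin n, v₁ x * A₁ x j := by
      rw [Finset.mul_sum]; exact Finset.sum_congr rfl fun k _ => by ring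
    linear_combination h0 + e1
  -- rewrite the integral in the RHS
  have hintval : (∫ θ in (-h)..0, (ω₁ (τ + θ) * AD θ) i j) =
      Complex.exp (lam * τ) * v₂ i * ∑ k, v₁ k * ∫ θ in (-h)..0, Complex.exp (lam * θ) * AD θ k j := by
    have h1 : ∀ θ : ℝ, (ω₁ (τ + θ) * AD θ) i j =
        ∑ k, Complex.exp (lam * τ) * v₂ i * (v₁ k * (Complex.exp (lam * θ) * AD θ k j)) := by
      intro θ
      simp only [hω₁, Matrix.mul_apply, Matrix.smul_apply, Matrix.vecMulVec_apply, smul_eq_mul]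
      apply Finset.sum_congr rfl
      intro k _
      rw [Complex.ofReal_add, mul_add, Complex.exp_add]
      ring
    simp only [h1]
    rw [intervalIntegral.integral_finset_sum (fun k _ =>
      ((show Continuous fun θ : ℝ => Complex.exp (lam * τ) * v₂ i *
        (v₁ k * (Complex.exp (lam * θ) * AD θ k j)) from
        continuous_const.mul (continuous_const.mul (hcont k))).intervalIntegrable _ _)),
      Finset.mul_sum]
    apply Finset.sum_congr rfl
    intro k _
    rw [intervalIntegral.integral_const_mul, intervalIntegral.integral_const_mul]
  -- compute the RHS value
  have hval : (ω₁ τ * A₀ + ω₁ (τ - h) * A₁ +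
      Matrix.of fun i j : Fin n => ∫ θ in (-h)..0, (ω₁ (τ + θ) * AD θ) i j) i j =
      Complex.exp (lam * τ) * lam * (v₂ i * v₁ j) := by
    simp only [Matrix.add_apply, Matrix.of_apply, hintval]
    have h2 : (ω₁ τ * A₀) i j = Complex.exp (lam * τ) * v₂ i * ∑ k, v₁ k * A₀ k j := by
      simp only [hω₁, Matrix.mul_apply, Matrix.smul_apply, Matrix.vecMulVec_apply, smul_eq_mul,
        Finset.mul_sum]
      exact Finset.sum_congr rfl fun k _ => by ring
    have h3 : (ω₁ (τ - h) * A₁) i j =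
        Complex.exp (lam * τ) * v₂ i * (Complex.exp (-lam * h) * ∑ k, v₁ k * A₁ k j) := by
      simp only [hω₁, Matrix.mul_apply, Matrix.smul_apply, Matrix.vecMulVec_apply, smul_eq_mul,
        Finset.mul_sum]
      have : Complex.exp (lam * ↑(τ - h)) = Complex.exp (lam * τ) * Complex.exp (-lam * h) := by
        rw [← Complex.exp_add]
        congr 1
        push_cast
        ring
      rw [this]
      exact Finset.sum_congr rfl fun k _ => by ring
    rw [h2, h3]
    linear_combination (-(Complex.exp (lam * τ) * v₂ i)) * he
  rw [show (fun t : ℝ => ω₁ t i j) = fun t : ℝ => Complex.exp (lam * t) * (v₂ i * v₁ j)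
      from funext key, hval]
  have h1 : HasDerivAt (fun t : ℝ => lam * (t : ℂ)) lam τ := by
    simpa using (Complex.ofRealCLM.hasDerivAt (x := τ)).const_mul lam
  simpa [mul_comm, mul_assoc, mul_left_comm] using h1.cexp.mul_const (v₂ i * v₁ j)
end
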